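/- Let α, β ∈ (0,1] with α + β > 1, h ∈ C^α([0,T];ℝ), g ∈ C^β([0,T];ℝ). Then for 0 ≤ s ≤ t ≤ T the Young integral ∫ₛᵗ h dg exists as a limit of Riemann sums, and there is a constant c_{α,β} > 0 (depending only on α, β) with |∫ₛᵗ h dg| ≤ |h(s)||g(t) - g(s)| + c_{α,β} ‖h‖_{α,[s,t]} ‖g‖_{β,[s,t]} (t-s)^{α+β}. -/

import Mathlib

open Finset

namespace YoungAux

noncomputable def RS (h g : ℝ → ℝ) : List ℝ → ℝ
  | a :: b :: l => h a * (g b - g a) + RS h g (b :: l)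
  | _ => 0

noncomputable def gapsum (σ : ℝ) : List ℝ → ℝ
  | a :: b :: l => (b - a) ^ σ + gapsum σ (b :: l)
  | _ => 0

@[simp] lemma RS_nil (h g : ℝ → ℝ) : RS h g [] = 0 := rfl
@[simp] lemma RS_single (h g : ℝ → ℝ) (a : ℝ) : RS h g [a] = 0 := rfl
@[simp] lemma RS_cons_cons (h g : ℝ → ℝ) (a b : ℝ) (l : List ℝ) :
    RS h g (a :: b :: l) = h a * (g b - g a) + RS h g (b :: l) := rfl

@[simp] lemma gapsum_nil (σ : ℝ) : gapsum σ [] = 0 := rfl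
@[simp] lemma gapsum_single (σ : ℝ) (a : ℝ) : gapsum σ [a] = 0 := rfl
@[simp] lemma gapsum_cons_cons (σ : ℝ) (a b : ℝ) (l : List ℝ) :
    gapsum σ (a :: b :: l) = (b - a) ^ σ + gapsum σ (b :: l) := rfl

lemma RS_append_cons (h g : ℝ → ℝ) :
    ∀ (xs : List ℝ) (y : ℝ) (ys : List ℝ),
      RS h g (xs ++ y :: ys) = RS h g (xs ++ [y]) + RS h g (y :: ys)
  | [], y, ys => by simp
  | [a], y, ys => by simp
  | a :: b :: xs, y, ys => by
    have ih := RS_append_cons h g (b :: xs) y ys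
    simp only [List.cons_append, RS_cons_cons] at *
    rw [ih]; ring

lemma RS_const (h g : ℝ → ℝ) (u : ℝ) :
    ∀ (l : List ℝ), (∀ x ∈ l, x = u) → RS h g l = 0
  | [], _ => rfl
  | [a], _ => rfl
  | a :: b :: l, hl => by
    have ha : a = u := hl a (by simp)
    have hb : b = u := hl b (by simp)
    have ih := RS_const h g u (b :: l) (fun x hx => hl x (List.mem_cons_of_mem _ hx))
    rw [RS_cons_cons, ih, ha, hb]; ring

/-- bounds of a sorted list between head and last -/
lemma mem_bounds :
    ∀ (l : List ℝ), l.Pairwise (· ≤ ·) → ∀ u v, l.head? = some u → l.getLast? = some v →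
      ∀ x ∈ l, u ≤ x ∧ x ≤ v
  | [], _, u, v, hu, _, x, hx => by simp at hu
  | [a], _, u, v, hu, hv, x, hx => by
    simp only [List.head?_cons, Option.some.injEq] at hu
    simp only [List.getLast?_singleton, Option.some.injEq] at hv
    simp only [List.mem_singleton] at hx
    subst hu; subst hv; subst hx; exact ⟨le_refl _, le_refl _⟩
  | a :: b :: l, hs, u, v, hu, hv, x, hx => by
    simp only [List.head?_cons, Option.some.injEq] at hu
    subst hu
    have hs' : (b :: l).Pairwise (· ≤ ·) := hs.of_cons
    have hab : a ≤ b := (List.rel_of_pairwise_cons hs (a' := b) (by simp))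
    have ih := mem_bounds (b :: l) hs' b v rfl (by rw [← hv]; exact (List.getLast?_cons_cons).symm)
    simp only [List.mem_cons] at hx
    rcases hx with hx | hx
    · subst hx
      constructor
      · exact le_refl _
      · have := ih b (by simp)
        linarith [this.2]
    · have := ih x (List.mem_cons.2 hx)
      exact ⟨le_trans hab this.1, this.2⟩

lemma gapsum_bound (σ C δ : ℝ) (hC : ∀ x y : ℝ, x ≤ y → y - x ≤ δ → (y - x) ^ σ ≤ C * (y - x)) :
    ∀ (l : List ℝ), l.Pairwise (· ≤ ·) → l.Chain' (fun a b => b - a ≤ δ) →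
      ∀ u v, l.head? = some u → l.getLast? = some v → gapsum σ l ≤ C * (v - u)
  | [], _, _, u, v, hu, _ => by simp at hu
  | [a], _, _, u, v, hu, hv => by
    simp only [List.head?_cons, Option.some.injEq] at hu
    simp only [List.getLast?_singleton, Option.some.injEq] at hv
    subst hu; subst hv; simp
  | a :: b :: l, hs, hc, u, v, hu, hv => by
    simp only [List.head?_cons, Option.some.injEq] at hu
    subst hu
    rw [List.getLast?_cons_cons] at hv
    have hab : a ≤ b := List.rel_of_pairwise_cons hs (a' := b) (by simp)
    have hbv : b ≤ v :=
      (mem_bounds (b :: l) hs.of_cons b v rfl hv b (by simp)).1.trans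
        ((mem_bounds (b :: l) hs.of_cons b v rfl hv b (by simp)).2)
    have hchain := (List.isChain_cons_cons).1 hc
    have h1 : (b - a) ^ σ ≤ C * (b - a) := hC a b hab hchain.1
    have ih := gapsum_bound σ C δ hC (b :: l) hs.of_cons hchain.2 b v rfl hv
    rw [gapsum_cons_cons]
    have : C * (v - a) = C * (b - a) + C * (v - b) := by ring
    rw [this]
    exact add_le_add h1 ih

/-- The core Young estimate: a Riemann sum over any partition of `[u,v]` is close to the
trivial one-interval sum. -/
lemma core (s t : ℝ) (h g : ℝ → ℝ) (Ch Cg α β : ℝ) (hα : 0 < α) (hβ : 0 < β)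
    (hCh : 0 ≤ Ch) (hCg : 0 ≤ Cg)
    (hH : ∀ x ∈ Set.Icc s t, ∀ y ∈ Set.Icc s t, |h x - h y| ≤ Ch * |x - y| ^ α)
    (hG : ∀ x ∈ Set.Icc s t, ∀ y ∈ Set.Icc s t, |g x - g y| ≤ Cg * |x - y| ^ β) :
    ∀ (n : ℕ) (l : List ℝ), l.length = n + 2 → l.Pairwise (· ≤ ·) →
      (∀ x ∈ l, x ∈ Set.Icc s t) →
      ∀ u v, l.head? = some u → l.getLast? = some v →
      |RS h g l - h u * (g v - g u)| ≤
        Ch * Cg * 2 ^ (α + β) * (∑ k ∈ Finset.range n, (((k : ℝ) + 1)⁻¹) ^ (α + β))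
          * (v - u) ^ (α + β) := by
  intro n
  induction n with
  | zero =>
    intro l hlen hs hmem u v hu hv
    match l, hlen with
    | [a, b], _ =>
      simp only [List.head?_cons, Option.some.injEq] at hu
      rw [show [a,b] = [a] ++ [b] by rfl, List.getLast?_append_of_ne_nil _ (by simp)] at hv
      simp only [List.getLast?_singleton, Option.some.injEq] at hv
      subst hu; subst hv
      simp [RS]
  | succ n ih =>
    intro l hlen hs hmem u v hu hv
    set σ := α + β with hσdef
    have hσpos : 0 < σ := by positivity
    set q : ℕ → ℝ := fun i => l.getD i 0 with hq
    have hlen' : l.length = n + 3 := by omega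
    have hqget : ∀ i (hi : i < l.length), q i = l[i] := by
      intro i hi; simp [hq, List.getD_eq_getElem _ _ hi, List.getElem?_eq_getElem hi]
    have hmono : ∀ i j, i ≤ j → j < l.length → q i ≤ q j := by
      intro i j hij hj
      rw [hqget i (lt_of_le_of_lt hij hj), hqget j hj]
      rcases eq_or_lt_of_le hij with rfl | hlt
      · exact le_refl _
      · exact hs.rel_get_of_lt (by exact hlt)
    have hq0 : q 0 = u := by
      rw [List.head?_eq_getElem?] at hu
      have h0 : 0 < l.length := by omega
      rw [hqget 0 h0]
      rw [List.getElem?_eq_getElem h0] at hu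
      exact Option.some_injective _ hu
    have hqlast : q (n + 2) = v := by
      rw [List.getLast?_eq_getElem?, hlen'] at hv
      rw [List.getElem?_eq_getElem (show n + 3 - 1 < l.length by omega)] at hv
      rw [hqget (n+2) (by omega)]
      exact Option.some_injective _ hv
    have huv : u ≤ v := by rw [← hq0, ← hqlast]; exact hmono 0 (n+2) (by omega) (by omega)
    -- window selection
    have hsum : ∑ i ∈ Finset.range (n + 1), (q (i + 2) - q i) ≤ 2 * (v - u) := by
      have e1 : ∀ i, q (i + 2) - q i = (q (i+1+1) - q (i+1)) + (q (i+1) - q i) := by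
        intro i; ring_nf
      calc ∑ i ∈ Finset.range (n + 1), (q (i + 2) - q i)
          = ∑ i ∈ Finset.range (n + 1), ((q (i+1+1) - q (i+1)) + (q (i+1) - q i)) := by
            apply Finset.sum_congr rfl; intro i _; exact e1 i
        _ = (q (n+1+1) - q (0+1)) + (q (n+1) - q 0) := by
            rw [Finset.sum_add_distrib, Finset.sum_range_sub (fun j => q (j+1)),
              Finset.sum_range_sub q]
        _ ≤ (v - u) + (v - u) := by
            have h1 : q (n+1+1) = v := by rw [← hqlast]
            have h2 : u ≤ q (0+1) := by rw [← hq0]; exact hmono 0 1 (by omega) (by omega)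
            have h3 : q (n+1) ≤ v := by rw [← hqlast]; exact hmono (n+1) (n+2) (by omega) (by omega)
            have h4 : u = q 0 := hq0.symm
            rw [h1]; rw [h4]; linarith
        _ = 2 * (v - u) := by ring
    have hex : ∃ i ∈ Finset.range (n + 1), q (i + 2) - q i ≤ 2 * (v - u) / (n + 1) := by
      apply Finset.exists_le_of_sum_le (by simp)
      rw [Finset.sum_const, Finset.card_range, nsmul_eq_mul]
      have hne : ((n:ℝ) + 1) ≠ 0 := by positivity
      have heq : ((n:ℝ)+1) * (2 * ((v - u) / ((n:ℝ)+1))) = 2*(v-u) := by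
        field_simp
      push_cast
      rw [show (2 * (v-u) / ((n:ℝ)+1)) = 2 * ((v - u) / ((n:ℝ)+1)) by ring]
      exact le_trans hsum (le_of_eq heq.symm)
    obtain ⟨i, hi_mem, hile⟩ := hex
    have hi_lt : i < n + 1 := Finset.mem_range.1 hi_mem
    have hi2 : i + 2 < l.length := by omega
    have hi1 : i + 1 < l.length := by omega
    have hi0 : i < l.length := by omega
    set a := q i with ha
    set b := q (i+1) with hb
    set c := q (i+2) with hc
    set d := l.drop (i + 3) with hd
    -- decomposition
    have hdecomp : l = l.take i ++ a :: b :: c :: d := by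
      conv_lhs => rw [← List.take_append_drop i l]
      congr 1
      rw [List.drop_eq_getElem_cons hi0, List.drop_eq_getElem_cons hi1,
        List.drop_eq_getElem_cons hi2, ← hqget i hi0, ← hqget (i+1) hi1, ← hqget (i+2) hi2]
    set l' : List ℝ := l.take i ++ a :: c :: d with hl'
    have hsub : l'.Sublist l := by
      rw [hl']
      conv_rhs => rw [hdecomp]
      apply List.Sublist.append (List.Sublist.refl _)
      exact (List.cons_sublist_cons).2 (List.sublist_cons_self b (c :: d))
    have hs' : l'.Pairwise (· ≤ ·) := List.Pairwise.sublist hsub hs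
    have hmem' : ∀ x ∈ l', x ∈ Set.Icc s t := fun x hx => hmem x (hsub.subset hx)
    have hlen'' : l'.length = n + 2 := by
      have h1 := congrArg List.length hdecomp
      simp only [List.length_append, List.length_cons] at h1 ⊢
      simp only [hl', List.length_append, List.length_cons]
      omega
    have hhead' : l'.head? = some u := by
      rcases htk : l.take i with _ | ⟨x, xs⟩
      · rw [hl', htk]
        rw [hdecomp, htk] at hu
        simpa using hu
      · rw [hl', htk]
        rw [hdecomp, htk] at hu
        simpa using hu
    have hlast' : l'.getLast? = some v := by
      have e1 : l = (l.take i ++ [a, b]) ++ c :: d := by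
        conv_lhs => rw [hdecomp]
        simp
      have e2 : l' = (l.take i ++ [a]) ++ c :: d := by
        rw [hl']; simp
      rw [e2, List.getLast?_append_of_ne_nil _ (by simp)]
      rw [e1, List.getLast?_append_of_ne_nil _ (by simp)] at hv
      exact hv
    have ihl' := ih l' hlen'' hs' hmem' u v hhead' hlast'
    -- RS difference
    have hRSdiff : RS h g l - RS h g l' = (h b - h a) * (g c - g b) := by
      have e1 : RS h g l = RS h g (l.take i ++ [a]) + RS h g (a :: b :: c :: d) := by
        conv_lhs => rw [hdecomp]
        exact RS_append_cons h g (l.take i) a (b :: c :: d)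
      have e2 : RS h g l' = RS h g (l.take i ++ [a]) + RS h g (a :: c :: d) := by
        rw [hl']; exact RS_append_cons h g (l.take i) a (c :: d)
      rw [e1, e2]
      simp only [RS_cons_cons]
      ring
    -- bound the difference
    have hamem : a ∈ Set.Icc s t := by rw [ha, hqget i hi0]; exact hmem _ (List.getElem_mem hi0)
    have hbmem : b ∈ Set.Icc s t := by rw [hb, hqget _ hi1]; exact hmem _ (List.getElem_mem hi1)
    have hcmem : c ∈ Set.Icc s t := by rw [hc, hqget _ hi2]; exact hmem _ (List.getElem_mem hi2)
    have hab : a ≤ b := hmono i (i+1) (by omega) hi1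
    have hbc : b ≤ c := hmono (i+1) (i+2) (by omega) hi2
    have h1 : |h b - h a| ≤ Ch * (b - a) ^ α := by
      have := hH b hbmem a hamem
      rwa [abs_of_nonneg (sub_nonneg.2 hab)] at this
    have h2 : |g c - g b| ≤ Cg * (c - b) ^ β := by
      have := hG c hcmem b hbmem
      rwa [abs_of_nonneg (sub_nonneg.2 hbc)] at this
    have hdiffbd : |RS h g l - RS h g l'| ≤
        Ch * Cg * 2 ^ σ * (((n : ℝ) + 1)⁻¹) ^ σ * (v - u) ^ σ := by
      calc |RS h g l - RS h g l'| = |h b - h a| * |g c - g b| := by rw [hRSdiff, abs_mul]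
        _ ≤ (Ch * (b - a) ^ α) * (Cg * (c - b) ^ β) :=
            mul_le_mul h1 h2 (abs_nonneg _)
              (mul_nonneg hCh (Real.rpow_nonneg (by linarith) _))
        _ ≤ (Ch * (c - a) ^ α) * (Cg * (c - a) ^ β) := by
            have e3 : (b - a) ^ α ≤ (c - a) ^ α :=
              Real.rpow_le_rpow (by linarith) (by linarith) hα.le
            have e4 : (c - b) ^ β ≤ (c - a) ^ β :=
              Real.rpow_le_rpow (by linarith) (by linarith) hβ.le
            exact mul_le_mul (mul_le_mul_of_nonneg_left e3 hCh)
              (mul_le_mul_of_nonneg_left e4 hCg)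
              (mul_nonneg hCg (Real.rpow_nonneg (by linarith) _))
              (mul_nonneg hCh (Real.rpow_nonneg (by linarith) _))
        _ = Ch * Cg * ((c - a) ^ σ) := by
            rw [hσdef, Real.rpow_add' (by linarith) (by rw [← hσdef]; exact ne_of_gt hσpos)]
            ring
        _ ≤ Ch * Cg * ((2 * (v - u) / ((n : ℝ) + 1)) ^ σ) :=
            mul_le_mul_of_nonneg_left
              (Real.rpow_le_rpow (by linarith) hile (le_of_lt hσpos))
              (mul_nonneg hCh hCg)
        _ = Ch * Cg * 2 ^ σ * (((n : ℝ) + 1)⁻¹) ^ σ * (v - u) ^ σ := by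
            rw [show 2 * (v - u) / ((n : ℝ) + 1) = 2 * ((v - u) * ((n : ℝ) + 1)⁻¹) by ring,
              Real.mul_rpow (by norm_num) (mul_nonneg (by linarith) (by positivity)),
              Real.mul_rpow (by linarith) (by positivity)]
            ring
    calc |RS h g l - h u * (g v - g u)|
        ≤ |RS h g l - RS h g l'| + |RS h g l' - h u * (g v - g u)| := by
          have : RS h g l - h u * (g v - g u) =
            (RS h g l - RS h g l') + (RS h g l' - h u * (g v - g u)) := by ring
          rw [this]; exact abs_add_le _ _
      _ ≤ Ch * Cg * 2 ^ σ * (((n : ℝ) + 1)⁻¹) ^ σ * (v - u) ^ σ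
          + Ch * Cg * 2 ^ σ * (∑ k ∈ Finset.range n, (((k : ℝ) + 1)⁻¹) ^ σ) * (v - u) ^ σ := by
          exact add_le_add hdiffbd ihl'
      _ = Ch * Cg * 2 ^ σ * (∑ k ∈ Finset.range (n+1), (((k : ℝ) + 1)⁻¹) ^ σ) * (v - u) ^ σ := by
          rw [Finset.sum_range_succ]
          push_cast
          ring

lemma summable_aux {σ : ℝ} (hσ : 1 < σ) :
    Summable (fun k : ℕ => (((k : ℝ) + 1)⁻¹) ^ σ) := by
  have h1 : Summable (fun n : ℕ => 1 / (n : ℝ) ^ σ) := Real.summable_one_div_nat_rpow.2 hσ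
  have h2 := (summable_nat_add_iff 1).2 h1
  apply h2.congr
  intro k
  rw [Real.inv_rpow (by positivity)]
  push_cast
  rw [one_div]

noncomputable def Kc (σ : ℝ) : ℝ := 2 ^ σ * ∑' k : ℕ, (((k : ℝ) + 1)⁻¹) ^ σ

lemma Kc_pos {σ : ℝ} (hσ : 1 < σ) : 0 < Kc σ := by
  apply mul_pos (Real.rpow_pos_of_pos (by norm_num) _)
  apply Summable.tsum_pos (summable_aux hσ) (fun i => Real.rpow_nonneg (by positivity) _) 0
  norm_num

lemma core' (s t : ℝ) (h g : ℝ → ℝ) (Ch Cg α β : ℝ) (hα : 0 < α) (hβ : 0 < β)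
    (hαβ : 1 < α + β) (hCh : 0 ≤ Ch) (hCg : 0 ≤ Cg)
    (hH : ∀ x ∈ Set.Icc s t, ∀ y ∈ Set.Icc s t, |h x - h y| ≤ Ch * |x - y| ^ α)
    (hG : ∀ x ∈ Set.Icc s t, ∀ y ∈ Set.Icc s t, |g x - g y| ≤ Cg * |x - y| ^ β)
    (l : List ℝ) (hs : l.Pairwise (· ≤ ·)) (hmem : ∀ x ∈ l, x ∈ Set.Icc s t)
    (u v : ℝ) (hu : l.head? = some u) (hv : l.getLast? = some v) :
    |RS h g l - h u * (g v - g u)| ≤ Kc (α + β) * Ch * Cg * (v - u) ^ (α + β) := by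
  match l, hu, hv with
  | [x], hu, hv =>
    simp only [List.head?_cons, Option.some.injEq] at hu
    simp only [List.getLast?_singleton, Option.some.injEq] at hv
    subst hu; subst hv
    simp only [RS_single]
    rw [sub_self, mul_zero, sub_zero, abs_zero, sub_self, Real.zero_rpow (by positivity),
      mul_zero]
  | (a :: b :: l'), hu, hv =>
    have hlen : (a :: b :: l').length = (l'.length) + 2 := by simp
    have hcore := core s t h g Ch Cg α β hα hβ hCh hCg hH hG l'.length (a :: b :: l')
      hlen hs hmem u v hu hv
    refine hcore.trans ?_
    have hsum_le : (∑ k ∈ Finset.range l'.length, (((k : ℝ) + 1)⁻¹) ^ (α + β))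
        ≤ ∑' k : ℕ, (((k : ℝ) + 1)⁻¹) ^ (α + β) :=
      Summable.sum_le_tsum _ (fun i _ => Real.rpow_nonneg (by positivity) _) (summable_aux hαβ)
    have huv : u ≤ v := by
      have hb := mem_bounds (a :: b :: l') hs u v hu hv
      have h1 := hb a (by simp)
      exact h1.1.trans h1.2
    calc Ch * Cg * 2 ^ (α + β) * (∑ k ∈ Finset.range l'.length, (((k : ℝ) + 1)⁻¹) ^ (α + β))
          * (v - u) ^ (α + β)
        ≤ Ch * Cg * 2 ^ (α + β) * (∑' k : ℕ, (((k : ℝ) + 1)⁻¹) ^ (α + β))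
          * (v - u) ^ (α + β) := by
          apply mul_le_mul_of_nonneg_right _ (Real.rpow_nonneg (by linarith) _)
          apply mul_le_mul_of_nonneg_left hsum_le
          positivity
      _ = Kc (α + β) * Ch * Cg * (v - u) ^ (α + β) := by rw [Kc]; ring

lemma sublist_split : ∀ {p₁ : ℝ} {p' R : List ℝ}, (p₁ :: p').Sublist R →
    ∃ pre post, R = pre ++ p₁ :: post ∧ p'.Sublist post := by
  intro p₁ p' R
  induction R with
  | nil => intro hsub; exact absurd hsub (by simp)
  | cons b R ih =>
    intro hsub
    cases hsub with
    | cons _ htail =>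
      obtain ⟨pre, post, hR, hp⟩ := ih htail
      exact ⟨b :: pre, post, by rw [hR]; rfl, hp⟩
    | cons_cons _ htail => exact ⟨[], R, rfl, htail⟩

lemma refine (s t : ℝ) (h g : ℝ → ℝ) (Ch Cg α β : ℝ) (hα : 0 < α) (hβ : 0 < β)
    (hαβ : 1 < α + β) (hCh : 0 ≤ Ch) (hCg : 0 ≤ Cg)
    (hH : ∀ x ∈ Set.Icc s t, ∀ y ∈ Set.Icc s t, |h x - h y| ≤ Ch * |x - y| ^ α)
    (hG : ∀ x ∈ Set.Icc s t, ∀ y ∈ Set.Icc s t, |g x - g y| ≤ Cg * |x - y| ^ β) :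
    ∀ (p R : List ℝ), p.Sublist R → R.Pairwise (· ≤ ·) → (∀ x ∈ R, x ∈ Set.Icc s t) →
      p.head? = R.head? → p.getLast? = R.getLast? →
      |RS h g R - RS h g p| ≤ Kc (α + β) * Ch * Cg * gapsum (α + β) p
  | [], R, hsub, hsR, hmem, hhead, hlast => by
    have : R = [] := by
      cases R with
      | nil => rfl
      | cons a R' => simp at hhead
    subst this
    simp
  | [u], R, hsub, hsR, hmem, hhead, hlast => by
    have hu : R.head? = some u := hhead.symm
    have hv : R.getLast? = some u := hlast.symm
    have hconst : ∀ x ∈ R, x = u := by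
      intro x hx
      have := mem_bounds R hsR u u hu hv x hx
      linarith [this.1, this.2]
    rw [RS_const h g u R hconst]
    simp
  | (u :: p₁ :: p'), R, hsub, hsR, hmem, hhead, hlast => by
    rcases R with _ | ⟨r0, R₀⟩
    · simp at hhead
    have hr0 : u = r0 := by
      simp only [List.head?_cons, Option.some.injEq] at hhead
      exact hhead
    subst hr0
    have hsub' : (p₁ :: p').Sublist R₀ := (List.cons_sublist_cons).1 hsub
    obtain ⟨pre, post, hR0, hpost⟩ := sublist_split hsub'
    have hRshape : u :: R₀ = (u :: pre) ++ p₁ :: post := by rw [hR0]; rfl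
    have e1 : RS h g (u :: R₀) = RS h g ((u :: pre) ++ [p₁]) + RS h g (p₁ :: post) := by
      conv_lhs => rw [hRshape]
      exact RS_append_cons h g (u :: pre) p₁ post
    set B : List ℝ := (u :: pre) ++ [p₁] with hB
    have hBsub : B.Sublist (u :: R₀) := by
      rw [hB]
      conv_rhs => rw [hRshape]
      exact List.Sublist.append (List.Sublist.refl _)
        ((List.cons_sublist_cons).2 (List.nil_sublist _))
    have hBsorted : B.Pairwise (· ≤ ·) := List.Pairwise.sublist hBsub hsR
    have hBmem : ∀ x ∈ B, x ∈ Set.Icc s t := fun x hx => hmem x (hBsub.subset hx)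
    have hBhead : B.head? = some u := rfl
    have hBlast : B.getLast? = some p₁ := by
      rw [hB, List.getLast?_append_of_ne_nil _ (by simp)]
      rfl
    have hBbound := core' s t h g Ch Cg α β hα hβ hαβ hCh hCg hH hG B hBsorted hBmem
      u p₁ hBhead hBlast
    -- recursive part
    have hsubrec : (p₁ :: p').Sublist (p₁ :: post) := (List.cons_sublist_cons).2 hpost
    have htailsub : (p₁ :: post).Sublist (u :: R₀) := by
      conv_rhs => rw [hRshape]
      exact List.sublist_append_right _ _
    have htsorted : (p₁ :: post).Pairwise (· ≤ ·) := List.Pairwise.sublist htailsub hsR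
    have htmem : ∀ x ∈ p₁ :: post, x ∈ Set.Icc s t := fun x hx => hmem x (htailsub.subset hx)
    have hthead : (p₁ :: p').head? = (p₁ :: post).head? := rfl
    have htlast : (p₁ :: p').getLast? = (p₁ :: post).getLast? := by
      rw [← List.getLast?_cons_cons (a := u) (b := p₁) (l := p'), hlast]
      conv_lhs => rw [hRshape]
      rw [List.getLast?_append_of_ne_nil _ (by simp)]
    have hrec := refine s t h g Ch Cg α β hα hβ hαβ hCh hCg hH hG (p₁ :: p') (p₁ :: post)
      hsubrec htsorted htmem hthead htlast
    -- combine
    have hdec : RS h g (u :: R₀) - RS h g (u :: p₁ :: p') =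
        (RS h g B - h u * (g p₁ - g u)) + (RS h g (p₁ :: post) - RS h g (p₁ :: p')) := by
      rw [e1, RS_cons_cons]
      ring
    rw [hdec, gapsum_cons_cons]
    calc |(RS h g B - h u * (g p₁ - g u)) + (RS h g (p₁ :: post) - RS h g (p₁ :: p'))|
        ≤ |RS h g B - h u * (g p₁ - g u)| + |RS h g (p₁ :: post) - RS h g (p₁ :: p')| :=
          abs_add_le _ _
      _ ≤ Kc (α + β) * Ch * Cg * (p₁ - u) ^ (α + β)
          + Kc (α + β) * Ch * Cg * gapsum (α + β) (p₁ :: p') := add_le_add hBbound hrec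
      _ = Kc (α + β) * Ch * Cg * ((p₁ - u) ^ (α + β) + gapsum (α + β) (p₁ :: p')) := by ring

def ptList (q : ℕ → ℝ) (m : ℕ) : List ℝ := (List.range (m + 1)).map q

@[simp] lemma ptList_def (q : ℕ → ℝ) (m : ℕ) : ptList q m = (List.range (m + 1)).map q := rfl

lemma ptList_ne_nil (q : ℕ → ℝ) (m : ℕ) : ptList q m ≠ [] := by
  simp [ptList, List.range_succ]

lemma RS_ptList (h g : ℝ → ℝ) (q : ℕ → ℝ) :
    ∀ m : ℕ, RS h g (ptList q m) =
      ∑ i ∈ Finset.range m, h (q i) * (g (q (i + 1)) - g (q i)) := by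
  intro m
  induction m with
  | zero => simp [ptList, List.range_succ]
  | succ m ih =>
    have e1 : ptList q (m + 1) = (List.range (m+1)).map q ++ [q (m+1)] := by
      simp [ptList, List.range_succ]
    have e2 : (List.range (m+1)).map q = (List.range m).map q ++ [q m] := by
      simp [List.range_succ]
    rw [e1, e2, List.append_assoc]
    have e3 : [q m] ++ [q (m+1)] = q m :: [q (m+1)] := rfl
    rw [e3, RS_append_cons h g _ (q m) [q (m+1)]]
    rw [show (List.range m).map q ++ [q m] = ptList q m from e2.symm]
    rw [ih, Finset.sum_range_succ, RS_cons_cons, RS_single]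
    ring

lemma gapsum_ptList_le (σ δ : ℝ) (q : ℕ → ℝ) (m : ℕ) (hmono : Monotone q)
    (hδ : ∀ i < m, q (i + 1) - q i ≤ δ)
    (C : ℝ) (hC : ∀ x y : ℝ, x ≤ y → y - x ≤ δ → (y - x) ^ σ ≤ C * (y - x)) :
    gapsum σ (ptList q m) ≤ C * (q m - q 0) := by
  apply gapsum_bound σ C δ hC (ptList q m)
  · rw [ptList_def, List.pairwise_map]
    exact (List.pairwise_lt_range (n := m+1)).imp (fun {a b} hab => hmono hab.le)
  · rw [ptList_def, List.Chain', List.isChain_map]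
    exact (List.isChain_range_succ _ m).2 hδ
  · rw [ptList_def, List.head?_map]
    have : (List.range (m+1)).head? = some 0 := by
      rw [List.range_succ_eq_map]; rfl
    rw [this]; rfl
  · rw [ptList_def, List.range_succ, List.map_append,
      List.getLast?_append_of_ne_nil _ (by simp)]
    rfl

lemma ptList_sorted (q : ℕ → ℝ) (m : ℕ) (hmono : Monotone q) :
    (ptList q m).Pairwise (· ≤ ·) := by
  rw [ptList_def, List.pairwise_map]
  exact (List.pairwise_lt_range (n := m+1)).imp (fun {a b} hab => hmono hab.le)

lemma ptList_head? (q : ℕ → ℝ) (m : ℕ) : (ptList q m).head? = some (q 0) := by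
  rw [ptList_def, List.head?_map]
  have : (List.range (m+1)).head? = some 0 := by
    rw [List.range_succ_eq_map]; rfl
  rw [this]; rfl

lemma ptList_getLast? (q : ℕ → ℝ) (m : ℕ) : (ptList q m).getLast? = some (q m) := by
  rw [ptList_def, List.range_succ, List.map_append,
    List.getLast?_append_of_ne_nil _ (by simp)]
  rfl

lemma ptList_mem (q : ℕ → ℝ) (m : ℕ) (x : ℝ) (hx : x ∈ ptList q m) :
    ∃ i ≤ m, x = q i := by
  rw [ptList_def, List.mem_map] at hx
  obtain ⟨i, hi, rfl⟩ := hx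
  exact ⟨i, Nat.lt_succ_iff.1 (List.mem_range.1 hi), rfl⟩

lemma gap_pow_le {σ : ℝ} (δ : ℝ) (hσ : 1 < σ) (hδ : 0 ≤ δ) :
    ∀ x y : ℝ, x ≤ y → y - x ≤ δ → (y - x) ^ σ ≤ δ ^ (σ - 1) * (y - x) := by
  intro x y hxy hyx
  have h0 : (0:ℝ) ≤ y - x := by linarith
  have e1 : (y - x) ^ σ = (y - x) ^ (σ - 1) * (y - x) := by
    rw [show σ = (σ - 1) + 1 by ring, Real.rpow_add' h0 (by linarith)]
    rw [Real.rpow_one]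
    ring_nf
  rw [e1]
  apply mul_le_mul_of_nonneg_right _ h0
  exact Real.rpow_le_rpow h0 hyx (by linarith)

lemma head?_sorted_of_min (l : List ℝ) (hs : l.Pairwise (· ≤ ·)) (u : ℝ) (hu : u ∈ l)
    (hlb : ∀ x ∈ l, u ≤ x) : l.head? = some u := by
  rcases l with _ | ⟨a, l'⟩
  · simp at hu
  · have h1 : u ≤ a := hlb a (by simp)
    have h2 : a ≤ u := by
      rcases List.mem_cons.1 hu with rfl | hmem
      · exact le_refl _
      · exact List.rel_of_pairwise_cons hs hmem
    simp [le_antisymm h2 h1]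

lemma getLast?_sorted_of_max :
    ∀ (l : List ℝ), l.Pairwise (· ≤ ·) → ∀ v : ℝ, v ∈ l → (∀ x ∈ l, x ≤ v) →
      l.getLast? = some v
  | [], _, v, hv, _ => by simp at hv
  | [a], _, v, hv, _ => by simp at hv; simp [hv]
  | a :: b :: l, hs, v, hv, hub => by
    rw [List.getLast?_cons_cons]
    apply getLast?_sorted_of_max (b :: l) hs.of_cons v
    · rcases List.mem_cons.1 hv with rfl | hmem
      · have h1 : b ≤ v := hub b (by simp)
        have h2 : v ≤ b := List.rel_of_pairwise_cons hs (a' := b) (by simp)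
        have : v = b := le_antisymm h2 h1
        rw [this]; simp
      · exact hmem
    · intro x hx
      exact hub x (List.mem_cons_of_mem _ hx)

/-- comparison of Riemann sums of two partitions of `[s,t]` via their common refinement -/
lemma pair (s t : ℝ) (h g : ℝ → ℝ) (Ch Cg α β : ℝ) (hα : 0 < α) (hβ : 0 < β)
    (hαβ : 1 < α + β) (hCh : 0 ≤ Ch) (hCg : 0 ≤ Cg) (hst : s ≤ t)
    (hH : ∀ x ∈ Set.Icc s t, ∀ y ∈ Set.Icc s t, |h x - h y| ≤ Ch * |x - y| ^ α)
    (hG : ∀ x ∈ Set.Icc s t, ∀ y ∈ Set.Icc s t, |g x - g y| ≤ Cg * |x - y| ^ β)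
    (L₁ L₂ : List ℝ) (hs1 : L₁.Pairwise (· ≤ ·)) (hs2 : L₂.Pairwise (· ≤ ·))
    (hm1 : ∀ x ∈ L₁, x ∈ Set.Icc s t) (hm2 : ∀ x ∈ L₂, x ∈ Set.Icc s t)
    (hh1 : L₁.head? = some s) (hh2 : L₂.head? = some s)
    (hl1 : L₁.getLast? = some t) (hl2 : L₂.getLast? = some t) :
    |RS h g L₁ - RS h g L₂| ≤
      Kc (α + β) * Ch * Cg * (gapsum (α + β) L₁ + gapsum (α + β) L₂) := by
  set R : List ℝ := (L₁ ++ L₂).mergeSort (fun a b => decide (a ≤ b)) with hR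
  have hperm : R.Perm (L₁ ++ L₂) := List.mergeSort_perm _ _
  have hsR : R.Pairwise (· ≤ ·) := List.pairwise_mergeSort' _ _
  have hmemR : ∀ x ∈ R, x ∈ Set.Icc s t := by
    intro x hx
    rcases List.mem_append.1 (hperm.mem_iff.1 hx) with hx | hx
    · exact hm1 x hx
    · exact hm2 x hx
  have hsub1 : L₁.Sublist R :=
    List.sublist_of_subperm_of_pairwise
      (((L₁.sublist_append_left L₂).subperm).trans hperm.symm.subperm) hs1 hsR
  have hsub2 : L₂.Sublist R :=
    List.sublist_of_subperm_of_pairwise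
      (((List.sublist_append_right L₁ L₂).subperm).trans hperm.symm.subperm) hs2 hsR
  have hsmem : s ∈ R := by
    rcases L₁ with _ | ⟨a, l⟩
    · simp at hh1
    · simp only [List.head?_cons, Option.some.injEq] at hh1
      exact hsub1.subset (by rw [← hh1]; simp)
  have htmem : t ∈ R := by
    have : t ∈ L₁ := by
      have hne : L₁ ≠ [] := by intro hc; rw [hc] at hh1; simp at hh1
      rw [List.getLast?_eq_getLast hne] at hl1
      have := List.getLast_mem hne
      rwa [Option.some_injective _ hl1] at this
    exact hsub1.subset this
  have hheadR : R.head? = some s :=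
    head?_sorted_of_min R hsR s hsmem (fun x hx => (hmemR x hx).1)
  have hlastR : R.getLast? = some t :=
    getLast?_sorted_of_max R hsR t htmem (fun x hx => (hmemR x hx).2)
  have hb1 := refine s t h g Ch Cg α β hα hβ hαβ hCh hCg hH hG L₁ R hsub1 hsR hmemR
    (by rw [hh1, hheadR]) (by rw [hl1, hlastR])
  have hb2 := refine s t h g Ch Cg α β hα hβ hαβ hCh hCg hH hG L₂ R hsub2 hsR hmemR
    (by rw [hh2, hheadR]) (by rw [hl2, hlastR])
  calc |RS h g L₁ - RS h g L₂|
      ≤ |RS h g R - RS h g L₁| + |RS h g R - RS h g L₂| := by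
        have e : RS h g L₁ - RS h g L₂ =
          -(RS h g R - RS h g L₁) + (RS h g R - RS h g L₂) := by ring
        rw [e]
        exact (abs_add_le _ _).trans (by rw [abs_neg])
    _ ≤ Kc (α + β) * Ch * Cg * gapsum (α + β) L₁
        + Kc (α + β) * Ch * Cg * gapsum (α + β) L₂ := add_le_add hb1 hb2
    _ = Kc (α + β) * Ch * Cg * (gapsum (α + β) L₁ + gapsum (α + β) L₂) := by ring

end YoungAux

open YoungAux

/-- Young integral for Hölder continuous functions. For `α, β ∈ (0,1]` with
`α + β > 1` there is a constant `c_{α,β} > 0` such that for any `h ∈ C^α`, `g ∈ C^β` on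
`[0,T]` and `0 ≤ s ≤ t ≤ T`, the Riemann sums `Σ h(rᵢ)(g(rᵢ₊₁) - g(rᵢ))` over partitions
of `[s,t]` converge (as the mesh goes to 0) to a limit `I = ∫ₛᵗ h dg` satisfying
`|I| ≤ |h(s)||g(t) - g(s)| + c_{α,β} ‖h‖_{α,[s,t]} ‖g‖_{β,[s,t]} (t-s)^{α+β}`. -/
theorem stmt_4 (α β : ℝ) (hα : α ∈ Set.Ioc (0:ℝ) 1) (hβ : β ∈ Set.Ioc (0:ℝ) 1)
    (hαβ : 1 < α + β) :
    ∃ c : ℝ, 0 < c ∧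
      ∀ (T : ℝ) (h g : ℝ → ℝ) (Ch Cg s t : ℝ),
        0 ≤ s → s ≤ t → t ≤ T → 0 ≤ Ch → 0 ≤ Cg →
        (∀ x ∈ Set.Icc s t, ∀ y ∈ Set.Icc s t, |h x - h y| ≤ Ch * |x - y| ^ α) →
        (∀ x ∈ Set.Icc s t, ∀ y ∈ Set.Icc s t, |g x - g y| ≤ Cg * |x - y| ^ β) →
        ∃ I : ℝ,
          (∀ ε > (0:ℝ), ∃ δ > (0:ℝ), ∀ (m : ℕ) (r : Fin (m + 1) → ℝ),
            Monotone r → r 0 = s → r (Fin.last m) = t →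
            (∀ i : Fin m, r i.succ - r i.castSucc < δ) →
            |(∑ i : Fin m, h (r i.castSucc) * (g (r i.succ) - g (r i.castSucc))) - I|
              < ε) ∧
          |I| ≤ |h s| * |g t - g s| + c * Ch * Cg * (t - s) ^ (α + β) := by
  obtain ⟨hα0, hα1⟩ := hα
  obtain ⟨hβ0, hβ1⟩ := hβ
  refine ⟨Kc (α + β), Kc_pos hαβ, ?_⟩
  intro T h g Ch Cg s t hs0 hst htT hCh hCg hH hG
  have hts : (0:ℝ) ≤ t - s := by linarith
  -- uniform partitions
  set qW : ℕ → ℕ → ℝ := fun m k => s + k * ((t - s) / m) with hqW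
  set W : ℕ → List ℝ := fun m => ptList (qW m) m with hWdef
  set A : ℕ → ℝ := fun n => RS h g (W (n + 1)) with hAdef
  have hdiv_nonneg : ∀ m : ℕ, 0 ≤ (t - s) / (m : ℝ) := fun m => div_nonneg hts (by positivity)
  have hqWmono : ∀ m : ℕ, Monotone (qW m) := by
    intro m i j hij
    simp only [hqW]
    have := hdiv_nonneg m
    have : (i:ℝ) * ((t-s)/m) ≤ (j:ℝ) * ((t-s)/m) :=
      mul_le_mul_of_nonneg_right (by exact_mod_cast hij) (hdiv_nonneg m)
    linarith
  have hqW0 : ∀ m : ℕ, qW m 0 = s := by intro m; simp [hqW]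
  have hqWm : ∀ m : ℕ, 1 ≤ m → qW m m = t := by
    intro m hm
    have hm0 : (m:ℝ) ≠ 0 := by positivity
    simp only [hqW]
    have hmm : (m:ℝ) * ((t - s) / m) = t - s := by field_simp
    linarith
  have hWsorted : ∀ m, (W m).Pairwise (· ≤ ·) := fun m => ptList_sorted _ _ (hqWmono m)
  have hWhead : ∀ m, (W m).head? = some s := by
    intro m; rw [hWdef]; rw [ptList_head?, hqW0]
  have hWlast : ∀ m, 1 ≤ m → (W m).getLast? = some t := by
    intro m hm; rw [hWdef]; rw [ptList_getLast?, hqWm m hm]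
  have hWmem : ∀ m, 1 ≤ m → ∀ x ∈ W m, x ∈ Set.Icc s t := by
    intro m hm x hx
    obtain ⟨i, him, rfl⟩ := ptList_mem _ _ _ hx
    constructor
    · simp only [hqW]
      have h1 : 0 ≤ (i:ℝ) * ((t-s)/m) := mul_nonneg (by positivity) (hdiv_nonneg m)
      linarith
    · have h2 : qW m i ≤ qW m m := hqWmono m him
      rwa [hqWm m hm] at h2
  set σ := α + β with hσdef
  have hσ1 : 1 < σ := hαβ
  have hσ0 : 0 < σ := by linarith
  set D : ℕ → ℝ := fun n => ((t - s) / ((n:ℝ) + 1)) ^ (σ - 1) * (t - s) with hDdef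
  have hDnonneg : ∀ n, 0 ≤ D n := by
    intro n
    exact mul_nonneg (Real.rpow_nonneg (div_nonneg hts (by positivity)) _) hts
  have hgapsW : ∀ n : ℕ, gapsum σ (W (n + 1)) ≤ D n := by
    intro n
    have hm : (1:ℕ) ≤ n + 1 := by omega
    have hδ' : ∀ i < n + 1, qW (n+1) (i+1) - qW (n+1) i ≤ (t - s)/((n:ℝ)+1) := by
      intro i _
      simp only [hqW]
      push_cast
      ring_nf
      exact le_refl _
    have := gapsum_ptList_le σ ((t-s)/((n:ℝ)+1)) (qW (n+1)) (n+1) (hqWmono (n+1)) hδ'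
      (((t-s)/((n:ℝ)+1)) ^ (σ - 1))
      (gap_pow_le ((t-s)/((n:ℝ)+1)) hσ1 (div_nonneg hts (by positivity)))
    rw [hqWm (n+1) hm, hqW0] at this
    have hcast : ((n+1:ℕ):ℝ) = (n:ℝ) + 1 := by push_cast; ring
    rw [hWdef, hDdef]
    convert this using 3 <;> rw [hcast]
  have hD0 : Filter.Tendsto D Filter.atTop (nhds 0) := by
    have h1 : Filter.Tendsto (fun n : ℕ => (t - s)/((n:ℝ)+1)) Filter.atTop (nhds 0) := by
      have h2 := tendsto_const_div_atTop_nhds_zero_nat (t - s)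
      have h3 := (Filter.tendsto_add_atTop_iff_nat 1).2 h2
      apply h3.congr
      intro n; push_cast; ring
    have h2 : ContinuousAt (fun x : ℝ => x ^ (σ - 1)) 0 :=
      Real.continuousAt_rpow_const 0 (σ - 1) (Or.inr (by linarith))
    have h3 := h2.tendsto.comp h1
    rw [Real.zero_rpow (sub_ne_zero.2 (ne_of_gt hσ1))] at h3
    have h4 := h3.mul_const (t - s)
    rw [zero_mul] at h4
    exact h4
  have hDmono : ∀ N n : ℕ, N ≤ n → D n ≤ D N := by
    intro N n hNn
    rw [hDdef]
    have hbase : (t - s)/((n:ℝ)+1) ≤ (t - s)/((N:ℝ)+1) := by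
      have hc : ((N:ℝ)+1) ≤ ((n:ℝ)+1) := by exact_mod_cast Nat.succ_le_succ hNn
      gcongr
    exact mul_le_mul_of_nonneg_right
      (Real.rpow_le_rpow (div_nonneg hts (by positivity)) hbase (by linarith)) hts
  set KCC := Kc σ * Ch * Cg with hKCCdef
  have hKCC : 0 ≤ KCC := by
    have := Kc_pos hσ1
    positivity
  have hAdist : ∀ n m N : ℕ, N ≤ n → N ≤ m → dist (A n) (A m) ≤ KCC * (2 * D N) := by
    intro n m N hNn hNm
    rw [Real.dist_eq]
    have hp := pair s t h g Ch Cg α β hα0 hβ0 hαβ hCh hCg hst hH hG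
      (W (n+1)) (W (m+1)) (hWsorted _) (hWsorted _)
      (hWmem _ (by omega)) (hWmem _ (by omega))
      (hWhead _) (hWhead _) (hWlast _ (by omega)) (hWlast _ (by omega))
    refine hp.trans ?_
    rw [← hσdef, ← hKCCdef]
    apply mul_le_mul_of_nonneg_left _ hKCC
    calc gapsum σ (W (n+1)) + gapsum σ (W (m+1)) ≤ D n + D m :=
          add_le_add (hgapsW n) (hgapsW m)
      _ ≤ D N + D N := add_le_add (hDmono N n hNn) (hDmono N m hNm)
      _ = 2 * D N := by ring
  have hb0 : Filter.Tendsto (fun N => KCC * (2 * D N)) Filter.atTop (nhds 0) := by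
    have := hD0.const_mul (KCC * 2)
    rw [mul_zero] at this
    apply this.congr
    intro N; ring
  have hcauchy : CauchySeq A := cauchySeq_of_le_tendsto_0 _ hAdist hb0
  obtain ⟨I, hI⟩ := cauchySeq_tendsto_of_complete hcauchy
  -- the trivial partition [s, t]
  have hst_sorted : ([s, t] : List ℝ).Pairwise (· ≤ ·) := by simp [hst]
  have hst_mem : ∀ x ∈ ([s, t] : List ℝ), x ∈ Set.Icc s t := by
    intro x hx
    rcases List.mem_cons.1 hx with rfl | hx
    · exact ⟨le_refl _, hst⟩
    · simp at hx; subst hx; exact ⟨hst, le_refl _⟩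
  have hRSst : RS h g [s, t] = h s * (g t - g s) := by simp
  have hgapsst : gapsum σ [s, t] = (t - s) ^ σ := by simp
  have htriv : ∀ n : ℕ, |A n - h s * (g t - g s)| ≤ KCC * (D n + (t - s) ^ σ) := by
    intro n
    have hp := pair s t h g Ch Cg α β hα0 hβ0 hαβ hCh hCg hst hH hG
      (W (n+1)) [s, t] (hWsorted _) hst_sorted (hWmem _ (by omega)) hst_mem
      (hWhead _) rfl (hWlast _ (by omega)) rfl
    rw [hRSst] at hp
    refine hp.trans ?_
    rw [← hσdef, ← hKCCdef]
    apply mul_le_mul_of_nonneg_left _ hKCC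
    rw [hgapsst]
    exact add_le_add_left (hgapsW n) _
  refine ⟨I, ?_, ?_⟩
  · -- ε-δ convergence of Riemann sums
    intro ε hε
    set M := KCC * (t - s) + 1 with hMdef
    have hM : 0 < M := by
      have : 0 ≤ KCC * (t - s) := mul_nonneg hKCC hts
      linarith
    set δ := (ε / (3 * M)) ^ ((σ - 1)⁻¹) with hδdef
    have hδpos : 0 < δ := Real.rpow_pos_of_pos (by positivity) _
    have hδσ : δ ^ (σ - 1) = ε / (3 * M) := by
      rw [hδdef, ← Real.rpow_mul (by positivity), inv_mul_cancel₀ (by linarith), Real.rpow_one]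
    obtain ⟨N₁, hN₁⟩ := Metric.tendsto_atTop.1 hI (ε / 3) (by positivity)
    obtain ⟨N₂, hN₂⟩ := Metric.tendsto_atTop.1 (hD0.const_mul KCC) (ε / 3) (by positivity)
    set N := max N₁ N₂ with hNdef
    refine ⟨δ, hδpos, ?_⟩
    intro m r hrmono hr0 hrl hgaps
    set q : ℕ → ℝ := fun i => r ⟨min i m, by omega⟩ with hqdef
    have hqmono : Monotone q := by
      intro i j hij
      exact hrmono (by simp only [Fin.mk_le_mk]; exact min_le_min_right m hij)
    have hq0 : q 0 = s := by
      have e : q 0 = r 0 := by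
        show r ⟨min 0 m, by omega⟩ = r 0
        congr 1
      rw [e, hr0]
    have hqm : q m = t := by
      have e : q m = r (Fin.last m) := by
        show r ⟨min m m, by omega⟩ = r (Fin.last m)
        congr 1
        apply Fin.ext; simp
      rw [e, hrl]
    have hqIcc : ∀ i, q i ∈ Set.Icc s t := by
      intro i
      constructor
      · rw [← hr0]; exact hrmono (Fin.zero_le _)
      · rw [← hrl]; exact hrmono (Fin.le_last _)
    set L := ptList q m with hLdef
    have hgapsL : ∀ i < m, q (i + 1) - q i ≤ δ := by
      intro i hi
      have hx := hgaps ⟨i, hi⟩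
      have e1 : q (i+1) = r (Fin.succ ⟨i, hi⟩) := by
        show r ⟨min (i+1) m, by omega⟩ = r (Fin.succ ⟨i, hi⟩)
        congr 1
        apply Fin.ext
        simp only [Fin.val_succ]
        omega
      have e2 : q i = r (Fin.castSucc ⟨i, hi⟩) := by
        show r ⟨min i m, by omega⟩ = r (Fin.castSucc ⟨i, hi⟩)
        congr 1
        apply Fin.ext
        simp only [Fin.coe_castSucc]
        omega
      rw [e1, e2]
      exact le_of_lt hx
    have hsum_eq : (∑ i : Fin m, h (r i.castSucc) * (g (r i.succ) - g (r i.castSucc)))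
        = RS h g L := by
      rw [hLdef, RS_ptList h g q m,
        ← Fin.sum_univ_eq_sum_range (fun i => h (q i) * (g (q (i + 1)) - g (q i))) m]
      apply Finset.sum_congr rfl
      intro i _
      have e1 : q (i.val + 1) = r i.succ := by
        show r ⟨min (i.val+1) m, by omega⟩ = r i.succ
        congr 1
        apply Fin.ext
        simp only [Fin.val_succ]
        omega
      have e2 : q i.val = r i.castSucc := by
        show r ⟨min i.val m, by omega⟩ = r i.castSucc
        congr 1
        apply Fin.ext
        simp only [Fin.coe_castSucc]
        omega
      rw [e1, e2]
    have hgapsumL : gapsum σ L ≤ δ ^ (σ - 1) * (t - s) := by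
      have := gapsum_ptList_le σ δ q m hqmono hgapsL (δ ^ (σ - 1))
        (gap_pow_le δ hσ1 hδpos.le)
      rwa [hqm, hq0] at this
    have hKL : KCC * gapsum σ L ≤ ε / 3 := by
      have h1 : KCC * gapsum σ L ≤ KCC * (δ ^ (σ - 1) * (t - s)) :=
        mul_le_mul_of_nonneg_left hgapsumL hKCC
      have h2 : KCC * (δ ^ (σ - 1) * (t - s)) = (KCC * (t - s)) * (ε / (3 * M)) := by
        rw [hδσ]; ring
      have h3 : (KCC * (t - s)) * (ε / (3 * M)) ≤ M * (ε / (3 * M)) := by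
        apply mul_le_mul_of_nonneg_right _ (by positivity)
        rw [hMdef]; linarith
      have h4 : M * (ε / (3 * M)) = ε / 3 := by
        field_simp
      linarith
    -- compare L with W (N+1)
    have hLsorted : L.Pairwise (· ≤ ·) := ptList_sorted _ _ hqmono
    have hLmem : ∀ x ∈ L, x ∈ Set.Icc s t := by
      intro x hx
      obtain ⟨i, _, rfl⟩ := ptList_mem _ _ _ hx
      exact hqIcc i
    have hLhead : L.head? = some s := by rw [hLdef, ptList_head?, hq0]
    have hLlast : L.getLast? = some t := by rw [hLdef, ptList_getLast?, hqm]
    have hp := pair s t h g Ch Cg α β hα0 hβ0 hαβ hCh hCg hst hH hG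
      L (W (N+1)) hLsorted (hWsorted _) hLmem (hWmem _ (by omega))
      hLhead (hWhead _) hLlast (hWlast _ (by omega))
    rw [← hσdef, ← hKCCdef] at hp
    have hWbound : KCC * gapsum σ (W (N+1)) ≤ KCC * D N :=
      mul_le_mul_of_nonneg_left (hgapsW N) hKCC
    have hDN : KCC * D N < ε / 3 := by
      have h5 := hN₂ N (le_max_right _ _)
      simp only [Real.dist_eq, mul_zero, sub_zero] at h5
      exact lt_of_le_of_lt (le_abs_self _) h5
    have hAI : |A N - I| < ε / 3 := by
      have := hN₁ N (le_max_left _ _)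
      rwa [Real.dist_eq] at this
    rw [hsum_eq]
    calc |RS h g L - I| ≤ |RS h g L - A N| + |A N - I| := by
          have e : RS h g L - I = (RS h g L - A N) + (A N - I) := by ring
          rw [e]; exact abs_add_le _ _
      _ ≤ KCC * (gapsum σ L + gapsum σ (W (N+1))) + |A N - I| := by
          apply add_le_add_left
          exact hp
      _ = KCC * gapsum σ L + KCC * gapsum σ (W (N+1)) + |A N - I| := by ring
      _ < ε / 3 + ε / 3 + ε / 3 := by
          apply add_lt_add_of_le_of_lt _ hAI
          apply add_le_add hKL (hWbound.trans hDN.le)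
      _ = ε := by ring
  · -- the bound on I
    have hIb : |I - h s * (g t - g s)| ≤ KCC * (0 + (t - s) ^ σ) := by
      apply le_of_tendsto_of_tendsto' ((hI.sub_const _).abs)
        (((hD0.add tendsto_const_nhds).const_mul KCC)) htriv
    have h1 : |I| ≤ |h s * (g t - g s)| + KCC * (t - s) ^ σ := by
      have := abs_sub_abs_le_abs_sub I (h s * (g t - g s))
      rw [zero_add] at hIb
      linarith
    rw [abs_mul] at h1
    calc |I| ≤ |h s| * |g t - g s| + KCC * (t - s) ^ σ := h1
      _ = |h s| * |g t - g s| + Kc (α + β) * Ch * Cg * (t - s) ^ (α + β) := by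
          rw [hKCCdef, hσdef]
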